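/- Let n, d be positive integers and let B be a set of size b = ⌈n / log₂ n⌉ with b ≥ d, and A a set of size n - b with C(b,d) ≥ |A|. Then the number of labelled faithful unit distance graphs on n vertices in R^d is at least |A|! · C(C(b,d), |A|). -/

import Mathlib

open Finset MeasureTheory Module

set_option linter.unusedSectionVars false
set_option linter.unusedVariables false
set_option maxHeartbeats 1000000

noncomputable section UDG15

variable {E : Type*} [NormedAddCommGroup E] [InnerProductSpace ℝ E] [FiniteDimensional ℝ E]

/-- Points `x` for which some sphere passes through `x` and all of `S`. -/
def udgSph (S : Finset E) : Set E := {x | ∃ c r, (∀ y ∈ S, dist c y = r) ∧ dist c x = r}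

/-- Affine independence of a finset (as a family on its coercion). -/
def udgAI (S : Finset E) : Prop := AffineIndependent ℝ (fun x : {y // y ∈ S} => (x : E))

lemma udgAI_family {S : Finset E} (h : udgAI S) :
    ∃ p : Fin S.card → E, Function.Injective p ∧ Set.range p = (S : Set E) ∧
      AffineIndependent ℝ p := by
  refine ⟨fun i => (S.equivFin.symm i : E), ?_, ?_, h.comp_embedding S.equivFin.symm.toEmbedding⟩
  · exact Subtype.coe_injective.comp S.equivFin.symm.injective
  · ext x
    constructor
    · rintro ⟨i, rfl⟩; exact (S.equivFin.symm i).2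
    · intro hx; exact ⟨S.equivFin ⟨x, hx⟩, by simp⟩

/-- Existence and uniqueness of the circumcenter data for an affinely independent
spanning finset. -/
lemma udg_circ {S : Finset E} (hAI : udgAI S) (hcard : S.card = finrank ℝ E + 1) :
    ∃ c r, 0 ≤ r ∧ (∀ y ∈ S, dist c y = r) ∧
      (∀ c' r', (∀ y ∈ S, dist c' y = r') → c' = c ∧ r' = r) := by
  obtain ⟨p, hpinj, hprange, hpAI⟩ := udgAI_family hAI
  haveI : Nonempty (Fin S.card) := by rw [hcard]; exact ⟨0⟩
  obtain ⟨cs, ⟨_, hcs⟩, hcsu⟩ := hpAI.existsUnique_dist_eq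
  have hspan : affineSpan ℝ (Set.range p) = ⊤ := by
    rw [hpAI.affineSpan_eq_top_iff_card_eq_finrank_add_one]
    simp [hcard]
  have hne : S.Nonempty := by
    rw [← Finset.card_pos, hcard]; omega
  obtain ⟨y0, hy0⟩ := hne
  have key : ∀ c' r', (∀ y ∈ S, dist c' y = r') → (⟨c', r'⟩ : EuclideanGeometry.Sphere E) = cs := by
    intro c' r' h
    refine hcsu _ ⟨by rw [hspan]; trivial, ?_⟩
    intro x hx
    rw [hprange] at hx
    simp only [Metric.mem_sphere]
    rw [dist_comm]
    exact h x hx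
  have hcs' : ∀ y ∈ S, dist cs.center y = cs.radius := by
    intro y hy
    have : y ∈ Set.range p := by rw [hprange]; exact hy
    have := hcs this
    simp only [Metric.mem_sphere] at this
    rw [dist_comm]; exact this
  refine ⟨cs.center, cs.radius, ?_, hcs', ?_⟩
  · rw [← hcs' y0 hy0]; exact dist_nonneg
  · intro c' r' h
    have := key c' r' h
    exact ⟨congrArg EuclideanGeometry.Sphere.center this,
      congrArg EuclideanGeometry.Sphere.radius this⟩

lemma udgSph_subset_sphere {S : Finset E} (hAI : udgAI S) (hcard : S.card = finrank ℝ E + 1) :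
    ∃ c r, udgSph S ⊆ Metric.sphere c r := by
  obtain ⟨c, r, _, _, huniq⟩ := udg_circ hAI hcard
  refine ⟨c, r, ?_⟩
  rintro x ⟨c', r', h', hx⟩
  obtain ⟨rfl, rfl⟩ := huniq c' r' h'
  rw [Metric.mem_sphere, dist_comm]; exact hx


/-- inserting a point outside the affine span of an affinely independent finset -/
lemma udgAI_insert [DecidableEq E] {S : Finset E} (hS : udgAI S) {x : E}
    (hx : x ∉ affineSpan ℝ (S : Set E)) : udgAI (insert x S) := by
  classical
  have hxS : x ∉ S := fun h => hx (mem_affineSpan ℝ h)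
  unfold udgAI at *
  set i : {y // y ∈ insert x S} := ⟨x, Finset.mem_insert_self x S⟩ with hi
  apply AffineIndependent.affineIndependent_of_notMem_span (i := i)
  · -- the family minus i is affinely independent
    have hmem : ∀ z : {z : {y // y ∈ insert x S} // z ≠ i}, (z.1.1 : E) ∈ S := by
      intro z
      rcases Finset.mem_insert.1 z.1.2 with h | h
      · exact absurd (Subtype.ext h) z.2
      · exact h
    have hinj : Function.Injective
        (fun z : {z : {y // y ∈ insert x S} // z ≠ i} => (⟨z.1.1, hmem z⟩ : {y // y ∈ S})) := by
      intro a b hab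
      have h2 := congrArg Subtype.val hab
      simp only at h2
      exact Subtype.ext (Subtype.ext h2)
    have := hS.comp_embedding ⟨_, hinj⟩
    exact this
  · -- x not in span of the others
    have himg : (fun z : {y // y ∈ insert x S} => (z : E)) '' {z | z ≠ i} = (S : Set E) := by
      ext y
      constructor
      · rintro ⟨z, hz, rfl⟩
        rcases Finset.mem_insert.1 z.2 with h | h
        · exact absurd (Subtype.ext h : z = i) hz
        · exact h
      · intro hy
        refine ⟨⟨y, Finset.mem_insert_of_mem hy⟩, ?_, rfl⟩
        intro h
        have : y = x := congrArg Subtype.val h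
        subst this
        exact hxS hy
    rw [himg]
    exact hx

/-- a small finset has affine span ≠ ⊤ -/
lemma udg_span_ne_top {S : Finset E} (h : S.card ≤ finrank ℝ E) (hE : 1 ≤ finrank ℝ E) :
    affineSpan ℝ (S : Set E) ≠ ⊤ := by
  classical
  intro htop
  rcases Nat.eq_zero_or_pos S.card with h0 | hpos
  · rw [Finset.card_eq_zero.1 h0] at htop
    simp only [Finset.coe_empty, AffineSubspace.span_empty] at htop
    haveI : Nontrivial E := nontrivial_of_finrank_pos (R := ℝ) (by omega : 0 < finrank ℝ E)
    exact absurd htop bot_ne_top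
  · have hb : Module.finrank ℝ (vectorSpan ℝ ((Finset.image id S : Finset E) : Set E)) ≤ S.card - 1 :=
      finrank_vectorSpan_image_finset_le ℝ id S (by omega)
    rw [Finset.image_id] at hb
    have hdir : (affineSpan ℝ (S : Set E)).direction = ⊤ := by rw [htop]; exact AffineSubspace.direction_top ℝ E E
    rw [direction_affineSpan] at hdir
    rw [hdir] at hb
    rw [finrank_top] at hb
    omega


lemma udg_gen (e : ℕ) (he : 1 ≤ e) (b : ℕ) :
    ∃ P : Finset (EuclideanSpace ℝ (Fin e)), P.card = b ∧
      (∀ S ⊆ P, S.card ≤ e + 1 → udgAI S) ∧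
      (∀ T ⊆ P, T.card = e + 2 → ¬ ∃ c r, ∀ y ∈ T, dist c y = r) := by
  classical
  haveI : Nontrivial (EuclideanSpace ℝ (Fin e)) := nontrivial_of_finrank_pos (R := ℝ)
    (by rw [finrank_euclideanSpace_fin]; omega)
  induction b with
  | zero =>
      refine ⟨∅, rfl, ?_, ?_⟩
      · intro S hS _
        rw [Finset.subset_empty.1 hS]
        unfold udgAI
        exact affineIndependent_of_subsingleton ℝ _
      · intro T hT hTc
        rw [Finset.subset_empty.1 hT] at hTc
        simp at hTc
  | succ b ih =>
      obtain ⟨P, hPc, hPai, hPsph⟩ := ih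
      set bad1 : Set (EuclideanSpace ℝ (Fin e)) := ⋃ S ∈ {S : Finset (EuclideanSpace ℝ (Fin e)) | S ⊆ P ∧ S.card ≤ e},
        (affineSpan ℝ (S : Set (EuclideanSpace ℝ (Fin e))) : Set (EuclideanSpace ℝ (Fin e))) with hbad1
      set bad2 : Set (EuclideanSpace ℝ (Fin e)) := ⋃ S ∈ {S : Finset (EuclideanSpace ℝ (Fin e)) | S ⊆ P ∧ S.card = e + 1}, udgSph S with hbad2
      have hcnt1 : {S : Finset (EuclideanSpace ℝ (Fin e)) | S ⊆ P ∧ S.card ≤ e}.Countable := by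
        apply Set.Countable.mono _ (P.powerset.finite_toSet.countable)
        intro S hS
        simpa using hS.1
      have hcnt2 : {S : Finset (EuclideanSpace ℝ (Fin e)) | S ⊆ P ∧ S.card = e + 1}.Countable := by
        apply Set.Countable.mono _ (P.powerset.finite_toSet.countable)
        intro S hS
        simpa using hS.1
      have hb1 : volume bad1 = 0 := by
        rw [hbad1, measure_biUnion_null_iff hcnt1]
        intro S hS
        exact Measure.addHaar_affineSubspace volume _
          (udg_span_ne_top (by rw [finrank_euclideanSpace_fin]; exact hS.2)
            (by rw [finrank_euclideanSpace_fin]; omega))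
      have hb2 : volume bad2 = 0 := by
        rw [hbad2, measure_biUnion_null_iff hcnt2]
        intro S hS
        obtain ⟨c, r, hsub⟩ := udgSph_subset_sphere
          (hPai S hS.1 (by rw [hS.2])) (by rw [finrank_euclideanSpace_fin]; exact hS.2)
        exact measure_mono_null hsub (Measure.addHaar_sphere volume c r)
      have hbad : volume (bad1 ∪ bad2) = 0 := by
        rw [measure_union_null_iff]; exact ⟨hb1, hb2⟩
      have hex : ∃ x : (EuclideanSpace ℝ (Fin e)), x ∉ bad1 ∪ bad2 := by
        by_contra h
        push_neg at h
        have hsub : (Set.univ : Set (EuclideanSpace ℝ (Fin e))) ⊆ bad1 ∪ bad2 := fun x _ => h x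
        have hle : volume (Set.univ : Set (EuclideanSpace ℝ (Fin e))) ≤ volume (bad1 ∪ bad2) :=
          measure_mono hsub
        rw [hbad] at hle
        have hnz : volume (Set.univ : Set (EuclideanSpace ℝ (Fin e))) ≠ 0 :=
          isOpen_univ.measure_ne_zero volume ⟨0, trivial⟩
        exact hnz (le_antisymm hle zero_le)
      obtain ⟨x, hx⟩ := hex
      have hx1 : x ∉ bad1 := fun h => hx (Or.inl h)
      have hx2 : x ∉ bad2 := fun h => hx (Or.inr h)
      have hnotspan : ∀ S : Finset (EuclideanSpace ℝ (Fin e)), S ⊆ P → S.card ≤ e → x ∉ affineSpan ℝ (S : Set (EuclideanSpace ℝ (Fin e))) := by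
        intro S h1 h2 hmem
        exact hx1 (Set.mem_biUnion (Set.mem_setOf.2 ⟨h1, h2⟩) hmem)
      have hnotsph : ∀ S : Finset (EuclideanSpace ℝ (Fin e)), S ⊆ P → S.card = e + 1 → x ∉ udgSph S := by
        intro S h1 h2 hmem
        exact hx2 (Set.mem_biUnion (Set.mem_setOf.2 ⟨h1, h2⟩) hmem)
      have hxP : x ∉ P := by
        intro hxP
        exact hnotspan {x} (Finset.singleton_subset_iff.2 hxP) (by simp; omega)
          (mem_affineSpan ℝ (by simp))
      refine ⟨insert x P, by rw [Finset.card_insert_of_notMem hxP, hPc], ?_, ?_⟩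
      · intro S hS hScard
        by_cases hxS : x ∈ S
        · have hS0 : S.erase x ⊆ P := by
            intro y hy
            have := hS (Finset.mem_of_mem_erase hy)
            rcases Finset.mem_insert.1 this with h | h
            · exact absurd h (Finset.ne_of_mem_erase hy)
            · exact h
          have hS0c : (S.erase x).card ≤ e := by
            rw [Finset.card_erase_of_mem hxS]; omega
          have hAI0 : udgAI (S.erase x) := hPai _ hS0 (by omega)
          have := udgAI_insert hAI0 (hnotspan _ hS0 hS0c)
          rwa [Finset.insert_erase hxS] at this
        · apply hPai S _ hScard
          intro y hy
          rcases Finset.mem_insert.1 (hS hy) with h | h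
          · exact absurd (h ▸ hy) hxS
          · exact h
      · intro T hT hTcard
        by_cases hxT : x ∈ T
        · have hT0 : T.erase x ⊆ P := by
            intro y hy
            have := hT (Finset.mem_of_mem_erase hy)
            rcases Finset.mem_insert.1 this with h | h
            · exact absurd h (Finset.ne_of_mem_erase hy)
            · exact h
          have hT0c : (T.erase x).card = e + 1 := by
            rw [Finset.card_erase_of_mem hxT]; omega
          rintro ⟨c, r, hcr⟩
          exact hnotsph _ hT0 hT0c
            ⟨c, r, fun y hy => hcr y (Finset.mem_of_mem_erase hy), hcr x hxT⟩
        · apply hPsph T _ hTcard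
          intro y hy
          rcases Finset.mem_insert.1 (hT hy) with h | h
          · exact absurd (h ▸ hy) hxT
          · exact h


lemma udg_sq_one {x : ℝ} (hx : 0 ≤ x) : x = 1 ↔ x ^ 2 = 1 := by
  constructor
  · rintro rfl; norm_num
  · intro h; nlinarith

lemma udg_distW {e : ℕ} (u v : EuclideanSpace ℝ (Fin e)) (s t : ℝ) :
    dist ((WithLp.equiv 2 (EuclideanSpace ℝ (Fin e) × ℝ)).symm (u, s))
      ((WithLp.equiv 2 (EuclideanSpace ℝ (Fin e) × ℝ)).symm (v, t))
      = Real.sqrt (dist u v ^ 2 + (s - t) ^ 2) := by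
  rw [WithLp.prod_dist_eq_of_L2]
  simp only [WithLp.equiv_symm_apply, WithLp.toLp_fst, WithLp.toLp_snd]
  congr 1
  simp [Real.dist_eq, sq_abs]

lemma udg_distW_sq {e : ℕ} (u v : EuclideanSpace ℝ (Fin e)) (s t : ℝ) :
    dist ((WithLp.equiv 2 (EuclideanSpace ℝ (Fin e) × ℝ)).symm (u, s))
      ((WithLp.equiv 2 (EuclideanSpace ℝ (Fin e) × ℝ)).symm (v, t)) ^ 2
      = dist u v ^ 2 + (s - t) ^ 2 := by
  rw [udg_distW, Real.sq_sqrt (by positivity)]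

/-- The geometric construction for `d = e + 1 ≥ 2`. -/
lemma udg_geoF (e : ℕ) (he : 1 ≤ e) (b m : ℕ) (ψ : Fin m → Finset (Fin b))
    (hc : ∀ a, (ψ a).card = e + 1) (hinj : Function.Injective ψ) :
    ∃ f : (Fin b ⊕ Fin m) → WithLp 2 (EuclideanSpace ℝ (Fin e) × ℝ),
      Function.Injective f ∧
      (∀ j a, dist (f (.inl j)) (f (.inr a)) = 1 ↔ j ∈ ψ a) ∧
      (∀ i j, i ≠ j → dist (f (.inl i)) (f (.inl j)) ≠ 1) ∧
      (∀ a a', a ≠ a' → dist (f (.inr a)) (f (.inr a')) ≠ 1) := by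
  classical
  obtain ⟨P, hPc, hAI, hSph⟩ := udg_gen e he b
  -- the B-points
  set pt : Fin b → EuclideanSpace ℝ (Fin e) :=
    fun j => (P.equivFin.symm ((finCongr hPc).symm j) : EuclideanSpace ℝ (Fin e)) with hpt
  have hptinj : Function.Injective pt := by
    intro i j hij
    have h1 := Subtype.coe_injective hij
    have h2 := P.equivFin.symm.injective h1
    exact (finCongr hPc).symm.injective h2
  have hptP : ∀ j, pt j ∈ P := fun j => (P.equivFin.symm ((finCongr hPc).symm j)).2
  -- the circumcenters of the A-vertex neighborhoods
  set Q : Fin m → Finset (EuclideanSpace ℝ (Fin e)) := fun a => (ψ a).image pt with hQ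
  have hQsub : ∀ a, Q a ⊆ P := by
    intro a y hy
    obtain ⟨j, _, rfl⟩ := Finset.mem_image.1 hy
    exact hptP j
  have hQcard : ∀ a, (Q a).card = e + 1 := by
    intro a
    rw [hQ]
    simp only
    rw [Finset.card_image_of_injective _ hptinj, hc]
  have hex : ∀ a, ∃ (cc : EuclideanSpace ℝ (Fin e)) (rr : ℝ),
      0 ≤ rr ∧ (∀ y ∈ Q a, dist cc y = rr) := by
    intro a
    obtain ⟨cc, rr, h0, h1, _⟩ := udg_circ (hAI _ (hQsub a) (le_of_eq (hQcard a)))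
      (by rw [finrank_euclideanSpace_fin]; exact hQcard a)
    exact ⟨cc, rr, h0, h1⟩
  choose c r hR0 hRd using hex
  -- key: no unintended sphere incidences
  have KEY : ∀ (a : Fin m) (y : EuclideanSpace ℝ (Fin e)),
      y ∈ P → y ∉ Q a → dist (c a) y ≠ r a := by
    intro a y hyP hyQ heq
    apply hSph (insert y (Q a)) (Finset.insert_subset hyP (hQsub a))
      (by rw [Finset.card_insert_of_notMem hyQ, hQcard])
    refine ⟨c a, r a, ?_⟩
    intro z hz
    rcases Finset.mem_insert.1 hz with rfl | hz
    · exact heq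
    · exact hRd a z hz
  -- scale
  set K : ℝ := 1 + (∑ a, (‖c a‖ + r a)) + ∑ j, ‖pt j‖ with hKdef
  have hsum1 : (0:ℝ) ≤ ∑ a, (‖c a‖ + r a) :=
    Finset.sum_nonneg fun i _ => add_nonneg (norm_nonneg _) (hR0 i)
  have hsum2 : (0:ℝ) ≤ ∑ j, ‖pt j‖ := Finset.sum_nonneg fun i _ => norm_nonneg _
  have hK1 : (1:ℝ) ≤ K := by rw [hKdef]; linarith
  have hK0 : (0:ℝ) < K := by linarith
  have hcrK : ∀ a, ‖c a‖ + r a ≤ ∑ a', (‖c a'‖ + r a') :=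
    fun a => Finset.single_le_sum (fun i _ => add_nonneg (norm_nonneg _) (hR0 i)) (mem_univ a)
  have hcK : ∀ a, ‖c a‖ ≤ K := by
    intro a; have := hcrK a; have := hR0 a; rw [hKdef]; linarith
  have hrK : ∀ a, r a ≤ K := by
    intro a; have := hcrK a; have h2 := norm_nonneg (c a); rw [hKdef]; linarith
  have hpK : ∀ j, ‖pt j‖ ≤ K := by
    intro j
    have := Finset.single_le_sum (f := fun j => ‖pt j‖) (fun i _ => norm_nonneg _) (mem_univ j)
    rw [hKdef]; linarith
  set δ : ℝ := 1 / (4 * K ^ 2) with hδdef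
  have hδ : 0 < δ := by rw [hδdef]; positivity
  have hδK : δ * K ≤ 1 / 4 := by
    rw [hδdef]
    rw [div_mul_eq_mul_div, one_mul, div_le_div_iff₀ (by positivity) (by norm_num)]
    nlinarith
  have hδK2 : δ ^ 2 * K ^ 2 ≤ 1 / 16 := by
    have h' := mul_nonneg hδ.le hK0.le
    have e4 : (δ * K) * (δ * K) ≤ (1/4 : ℝ) * (1/4) :=
      mul_le_mul hδK hδK h' (by norm_num)
    nlinarith
  set h : Fin m → ℝ := fun a => Real.sqrt (1 - δ ^ 2 * (r a) ^ 2) with hhdef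
  have hδr : ∀ a, δ * r a ≤ 1 / 4 := by
    intro a
    calc δ * r a ≤ δ * K := mul_le_mul_of_nonneg_left (hrK a) hδ.le
      _ ≤ 1 / 4 := hδK
  have hδr0 : ∀ a, 0 ≤ δ * r a := fun a => mul_nonneg hδ.le (hR0 a)
  have harg : ∀ a, (15:ℝ)/16 ≤ 1 - δ ^ 2 * (r a) ^ 2 := by
    intro a
    have h1 := hδr a
    have h2 := hδr0 a
    nlinarith
  have hh2 : ∀ a, (h a) ^ 2 = 1 - δ ^ 2 * (r a) ^ 2 := by
    intro a
    rw [hhdef]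
    exact Real.sq_sqrt (by linarith [harg a])
  have hhhalf : ∀ a, 1/2 ≤ h a := by
    intro a
    rw [hhdef]
    have e5 : (1/2 : ℝ) = Real.sqrt (1/4) := by
      rw [show (1/4:ℝ) = (1/2)^2 by norm_num, Real.sqrt_sq (by norm_num)]
    rw [e5]
    apply Real.sqrt_le_sqrt
    linarith [harg a]
  have hh1 : ∀ a, h a ≤ 1 := by
    intro a
    rw [hhdef]
    rw [Real.sqrt_le_one]
    nlinarith [hδr0 a]
  have hh0 : ∀ a, 0 ≤ h a := fun a => le_trans (by norm_num) (hhhalf a)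
  set W := (WithLp.equiv 2 (EuclideanSpace ℝ (Fin e) × ℝ)).symm with hW
  refine ⟨Sum.elim (fun j => W (δ • pt j, 0)) (fun a => W (δ • c a, h a)), ?_, ?_, ?_, ?_⟩
  · -- injectivity
    have hWinj : Function.Injective W :=
      (WithLp.equiv 2 (EuclideanSpace ℝ (Fin e) × ℝ)).symm.injective
    have hkey : ∀ (a a' : Fin m), c a = c a' → r a = r a' → a = a' := by
      intro a a' hcc hrr
      by_contra hne
      have hψ : ψ a ≠ ψ a' := fun hh => hne (hinj hh)
      have hnsub : ¬ (ψ a' ⊆ ψ a) := by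
        intro hsub
        exact hψ (Finset.eq_of_subset_of_card_le hsub (by rw [hc, hc])).symm
      obtain ⟨j', hj'mem, hj'not⟩ := Finset.not_subset.1 hnsub
      have hy1 : pt j' ∈ Q a' := Finset.mem_image_of_mem pt hj'mem
      have hy2 : pt j' ∉ Q a := by
        intro hmem
        obtain ⟨j'', hj'', heq⟩ := Finset.mem_image.1 hmem
        have hjj : j'' = j' := hptinj heq
        rw [hjj] at hj''
        exact hj'not hj''
      apply KEY a (pt j') (hptP j') hy2
      rw [hcc, hrr]
      exact hRd a' _ hy1
    intro x y hxy
    rcases x with i | a <;> rcases y with j | a' <;>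
      simp only [Sum.elim_inl, Sum.elim_inr] at hxy
    · have h0 := hWinj hxy
      have h1 : δ • pt i = δ • pt j := congrArg Prod.fst h0
      have h2 := smul_right_injective (EuclideanSpace ℝ (Fin e)) (ne_of_gt hδ) h1
      exact congrArg Sum.inl (hptinj h2)
    · exfalso
      have h0 := hWinj hxy
      have h2 : (0:ℝ) = h a' := congrArg Prod.snd h0
      linarith [hhhalf a']
    · exfalso
      have h0 := hWinj hxy
      have h2 : h a = (0:ℝ) := congrArg Prod.snd h0
      linarith [hhhalf a]
    · have h0 := hWinj hxy
      have h1 : δ • c a = δ • c a' := congrArg Prod.fst h0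
      have hcc : c a = c a' := smul_right_injective (EuclideanSpace ℝ (Fin e)) (ne_of_gt hδ) h1
      have h2 : h a = h a' := congrArg Prod.snd h0
      have hrr : r a = r a' := by
        have e1 : 1 - δ ^ 2 * (r a) ^ 2 = 1 - δ ^ 2 * (r a') ^ 2 := by
          rw [← hh2 a, ← hh2 a', h2]
        have e2 : (r a) ^ 2 = (r a') ^ 2 := by
          have hδ2 : (0:ℝ) < δ ^ 2 := by positivity
          nlinarith
        rw [← Real.sqrt_sq (hR0 a), e2, Real.sqrt_sq (hR0 a')]
      exact congrArg Sum.inr (hkey a a' hcc hrr)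
  · -- unit distances B-A
    intro j a
    simp only [Sum.elim_inl, Sum.elim_inr]
    have hsq : dist (W (δ • pt j, 0)) (W (δ • c a, h a)) ^ 2
        = δ ^ 2 * dist (c a) (pt j) ^ 2 + (h a) ^ 2 := by
      rw [hW, udg_distW_sq, dist_smul₀, Real.norm_eq_abs, abs_of_pos hδ, dist_comm (pt j)]
      ring
    constructor
    · intro hdist
      by_contra hjnot
      have hptQ : pt j ∉ Q a := by
        intro hmem
        obtain ⟨j'', hj'', heq⟩ := Finset.mem_image.1 hmem
        have hjj : j'' = j := hptinj heq
        rw [hjj] at hj''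
        exact hjnot hj''
      have hne := KEY a (pt j) (hptP j) hptQ
      have h1 : dist (W (δ • pt j, 0)) (W (δ • c a, h a)) ^ 2 = 1 := by rw [hdist]; norm_num
      rw [hsq, hh2 a] at h1
      have e2 : dist (c a) (pt j) ^ 2 = (r a) ^ 2 := by
        have hδ2 : (0:ℝ) < δ ^ 2 := by positivity
        nlinarith
      apply hne
      rw [← Real.sqrt_sq dist_nonneg, e2, Real.sqrt_sq (hR0 a)]
    · intro hj
      have hQm : pt j ∈ Q a := Finset.mem_image_of_mem pt hj
      have hd : dist (c a) (pt j) = r a := hRd a _ hQm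
      rw [udg_sq_one dist_nonneg, hsq, hd, hh2 a]
      ring
  · -- B-B non-unit
    intro i j hij
    simp only [Sum.elim_inl]
    have hd : dist (W (δ • pt i, 0)) (W (δ • pt j, 0))
        = δ * dist (pt i) (pt j) := by
      rw [hW, udg_distW]
      rw [dist_smul₀, Real.norm_eq_abs, abs_of_pos hδ]
      rw [show (0:ℝ) - 0 = 0 by ring]
      rw [show ((δ * dist (pt i) (pt j)) ^ 2 + 0 ^ 2 : ℝ) = (δ * dist (pt i) (pt j)) ^ 2 by ring]
      exact Real.sqrt_sq (by positivity)
    rw [hd]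
    have hbd : δ * dist (pt i) (pt j) ≤ 1/2 := by
      have h1 : dist (pt i) (pt j) ≤ ‖pt i‖ + ‖pt j‖ := dist_le_norm_add_norm _ _
      have h2 : dist (pt i) (pt j) ≤ 2 * K := by
        have := hpK i; have := hpK j; linarith
      calc δ * dist (pt i) (pt j) ≤ δ * (2 * K) := mul_le_mul_of_nonneg_left h2 hδ.le
        _ = 2 * (δ * K) := by ring
        _ ≤ 1/2 := by linarith [hδK]
    intro hcon
    rw [hcon] at hbd
    norm_num at hbd
  · -- A-A non-unit
    intro a a' haa
    simp only [Sum.elim_inr]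
    have hsq : dist (W (δ • c a, h a)) (W (δ • c a', h a')) ^ 2
        = (δ * dist (c a) (c a')) ^ 2 + (h a - h a') ^ 2 := by
      rw [hW, udg_distW_sq, dist_smul₀, Real.norm_eq_abs, abs_of_pos hδ]
    have b1 : δ * dist (c a) (c a') ≤ 1/2 := by
      have h1 : dist (c a) (c a') ≤ ‖c a‖ + ‖c a'‖ := dist_le_norm_add_norm _ _
      have h2 : dist (c a) (c a') ≤ 2 * K := by
        have := hcK a; have := hcK a'; linarith
      calc δ * dist (c a) (c a') ≤ δ * (2 * K) := mul_le_mul_of_nonneg_left h2 hδ.le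
        _ = 2 * (δ * K) := by ring
        _ ≤ 1/2 := by linarith [hδK]
    have b1' : (0:ℝ) ≤ δ * dist (c a) (c a') := mul_nonneg hδ.le dist_nonneg
    have b2 : |h a - h a'| ≤ 1/16 := by
      have hsum : (1:ℝ) ≤ h a + h a' := by linarith [hhhalf a, hhhalf a']
      have e1 : |h a - h a'| * (h a + h a') = |(h a)^2 - (h a')^2| := by
        rw [show (h a)^2 - (h a')^2 = (h a - h a') * (h a + h a') by ring, abs_mul,
          abs_of_nonneg (by linarith : (0:ℝ) ≤ h a + h a')]
      have e2 : |(h a)^2 - (h a')^2| ≤ δ ^ 2 * K ^ 2 := by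
        rw [hh2 a, hh2 a']
        rw [show (1 - δ^2 * (r a)^2) - (1 - δ^2 * (r a')^2) = δ^2 * ((r a')^2 - (r a)^2) by ring]
        rw [abs_mul, abs_of_nonneg (by positivity : (0:ℝ) ≤ δ^2)]
        have habs : |(r a')^2 - (r a)^2| ≤ K^2 := by
          rw [abs_le]
          constructor <;> nlinarith [hR0 a, hR0 a', hrK a, hrK a', hK0]
        nlinarith [sq_nonneg δ]
      calc |h a - h a'| = |h a - h a'| * 1 := by ring
        _ ≤ |h a - h a'| * (h a + h a') := mul_le_mul_of_nonneg_left hsum (abs_nonneg _)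
        _ = |(h a)^2 - (h a')^2| := e1
        _ ≤ δ ^ 2 * K ^ 2 := e2
        _ ≤ 1/16 := hδK2
    have hlt : dist (W (δ • c a, h a)) (W (δ • c a', h a')) ^ 2 < 1 := by
      rw [hsq]
      have hb2sq : (h a - h a') ^ 2 ≤ (1/16:ℝ)^2 := by
        rw [← sq_abs]
        have := abs_nonneg (h a - h a')
        nlinarith
      have hb1sq : (δ * dist (c a) (c a')) ^ 2 ≤ (1/2:ℝ)^2 := by nlinarith
      nlinarith
    intro hcon
    rw [hcon] at hlt
    norm_num at hlt


lemma udg_distW0 {e : ℕ} (s t : ℝ) :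
    dist ((WithLp.equiv 2 (EuclideanSpace ℝ (Fin e) × ℝ)).symm (0, s))
      ((WithLp.equiv 2 (EuclideanSpace ℝ (Fin e) × ℝ)).symm (0, t)) = |s - t| := by
  rw [udg_distW]
  simp [Real.sqrt_sq_eq_abs]

/-- The geometric construction for `d = 1` (on a line). -/
lemma udg_geoF0 (b m : ℕ) (ψ : Fin m → Finset (Fin b))
    (hc : ∀ a, (ψ a).card = 0 + 1) (hinj : Function.Injective ψ) :
    ∃ f : (Fin b ⊕ Fin m) → WithLp 2 (EuclideanSpace ℝ (Fin 0) × ℝ),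
      Function.Injective f ∧
      (∀ j a, dist (f (.inl j)) (f (.inr a)) = 1 ↔ j ∈ ψ a) ∧
      (∀ i j, i ≠ j → dist (f (.inl i)) (f (.inl j)) ≠ 1) ∧
      (∀ a a', a ≠ a' → dist (f (.inr a)) (f (.inr a')) ≠ 1) := by
  classical
  have hc1 : ∀ a, (ψ a).card = 1 := fun a => hc a
  have hja : ∀ a, ∃ j, ψ a = {j} := fun a => Finset.card_eq_one.1 (hc1 a)
  choose ja hja using hja
  set W := (WithLp.equiv 2 (EuclideanSpace ℝ (Fin 0) × ℝ)).symm with hW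
  have hjainj : Function.Injective ja := by
    intro a a' haa
    apply hinj
    rw [hja a, hja a', haa]
  refine ⟨Sum.elim (fun j => W (0, 3 * (j.val : ℝ)))
    (fun a => W (0, 3 * ((ja a).val : ℝ) + 1)), ?_, ?_, ?_, ?_⟩
  · have hWinj : Function.Injective W :=
      (WithLp.equiv 2 (EuclideanSpace ℝ (Fin 0) × ℝ)).symm.injective
    intro x y hxy
    rcases x with i | a <;> rcases y with j | a' <;>
      simp only [Sum.elim_inl, Sum.elim_inr] at hxy
    · have h0 := hWinj hxy
      have h1 : 3 * (i.val : ℝ) = 3 * (j.val : ℝ) := congrArg Prod.snd h0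
      have h2 : (i.val : ℝ) = j.val := by linarith
      exact congrArg Sum.inl (Fin.ext (by exact_mod_cast h2))
    · exfalso
      have h1 : 3 * (i.val : ℝ) = 3 * ((ja a').val : ℝ) + 1 := congrArg Prod.snd (hWinj hxy)
      have h2 : ((3 * i.val : ℕ) : ℝ) = ((3 * (ja a').val + 1 : ℕ) : ℝ) := by push_cast; linarith
      have h3 := Nat.cast_injective (R := ℝ) h2
      omega
    · exfalso
      have h1 : 3 * ((ja a).val : ℝ) + 1 = 3 * (j.val : ℝ) := congrArg Prod.snd (hWinj hxy)
      have h2 : ((3 * (ja a).val + 1 : ℕ) : ℝ) = ((3 * j.val : ℕ) : ℝ) := by push_cast; linarith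
      have h3 := Nat.cast_injective (R := ℝ) h2
      omega
    · have h1 : 3 * ((ja a).val : ℝ) + 1 = 3 * ((ja a').val : ℝ) + 1 :=
        congrArg Prod.snd (hWinj hxy)
      have h2 : ((ja a).val : ℝ) = ((ja a').val) := by linarith
      exact congrArg Sum.inr (hjainj (Fin.ext (by exact_mod_cast h2)))
  · intro j a
    simp only [Sum.elim_inl, Sum.elim_inr]
    rw [hW, udg_distW0]
    rw [hja a, Finset.mem_singleton]
    constructor
    · intro hd
      rcases (abs_eq (by norm_num : (0:ℝ) ≤ 1)).1 hd with h1 | h1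
      · exfalso
        have h2 : ((3 * j.val : ℕ) : ℝ) = ((3 * (ja a).val + 2 : ℕ) : ℝ) := by push_cast; linarith
        have h3 := Nat.cast_injective (R := ℝ) h2
        omega
      · have h2 : ((3 * j.val : ℕ) : ℝ) = ((3 * (ja a).val : ℕ) : ℝ) := by push_cast; linarith
        have h3 := Nat.cast_injective (R := ℝ) h2
        have : j.val = (ja a).val := by omega
        exact Fin.ext this
    · rintro rfl
      norm_num
  · intro i j hij
    simp only [Sum.elim_inl]
    rw [hW, udg_distW0]
    intro hd
    rcases (abs_eq (by norm_num : (0:ℝ) ≤ 1)).1 hd with h1 | h1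
    · have h2 : ((3 * i.val : ℕ) : ℝ) = ((3 * j.val + 1 : ℕ) : ℝ) := by push_cast; linarith
      have h3 := Nat.cast_injective (R := ℝ) h2
      omega
    · have h2 : ((3 * i.val + 1 : ℕ) : ℝ) = ((3 * j.val : ℕ) : ℝ) := by push_cast; linarith
      have h3 := Nat.cast_injective (R := ℝ) h2
      omega
  · intro a a' haa
    simp only [Sum.elim_inr]
    rw [hW, udg_distW0]
    intro hd
    rcases (abs_eq (by norm_num : (0:ℝ) ≤ 1)).1 hd with h1 | h1
    · have h2 : ((3 * (ja a).val : ℕ) : ℝ) = ((3 * (ja a').val + 1 : ℕ) : ℝ) := by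
        push_cast; linarith
      have h3 := Nat.cast_injective (R := ℝ) h2
      omega
    · have h2 : ((3 * (ja a).val + 1 : ℕ) : ℝ) = ((3 * (ja a').val : ℕ) : ℝ) := by
        push_cast; linarith
      have h3 := Nat.cast_injective (R := ℝ) h2
      omega

/-- The full geometric lemma in `ℝ^d`. -/
lemma udg_geo (d : ℕ) (hd : 1 ≤ d) (b m : ℕ) (ψ : Fin m → Finset (Fin b))
    (hc : ∀ a, (ψ a).card = d) (hinj : Function.Injective ψ) :
    ∃ f : (Fin b ⊕ Fin m) → EuclideanSpace ℝ (Fin d), Function.Injective f ∧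
      (∀ j a, dist (f (.inl j)) (f (.inr a)) = 1 ↔ j ∈ ψ a) ∧
      (∀ i j, i ≠ j → dist (f (.inl i)) (f (.inl j)) ≠ 1) ∧
      (∀ a a', a ≠ a' → dist (f (.inr a)) (f (.inr a')) ≠ 1) := by
  obtain ⟨e, rfl⟩ : ∃ e, d = e + 1 := ⟨d - 1, by omega⟩
  have hF : ∃ f : (Fin b ⊕ Fin m) → WithLp 2 (EuclideanSpace ℝ (Fin e) × ℝ),
      Function.Injective f ∧
      (∀ j a, dist (f (.inl j)) (f (.inr a)) = 1 ↔ j ∈ ψ a) ∧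
      (∀ i j, i ≠ j → dist (f (.inl i)) (f (.inl j)) ≠ 1) ∧
      (∀ a a', a ≠ a' → dist (f (.inr a)) (f (.inr a')) ≠ 1) := by
    rcases Nat.eq_zero_or_pos e with rfl | he
    · exact udg_geoF0 b m ψ hc hinj
    · exact udg_geoF e he b m ψ hc hinj
  obtain ⟨f, hfi, hf1, hf2, hf3⟩ := hF
  have hrank : finrank ℝ (WithLp 2 (EuclideanSpace ℝ (Fin e) × ℝ)) = e + 1 := by
    rw [(WithLp.linearEquiv 2 ℝ (EuclideanSpace ℝ (Fin e) × ℝ)).finrank_eq]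
    rw [Module.finrank_prod, finrank_euclideanSpace_fin, finrank_self]
  set L := (stdOrthonormalBasis ℝ (WithLp 2 (EuclideanSpace ℝ (Fin e) × ℝ))).repr with hL
  set J := LinearIsometryEquiv.piLpCongrLeft 2 ℝ ℝ (finCongr hrank) with hJ
  refine ⟨fun x => J (L (f x)), ?_, ?_, ?_, ?_⟩
  · intro x y hxy
    exact hfi (L.injective (J.injective hxy))
  · intro j a
    rw [J.dist_map, L.dist_map]
    exact hf1 j a
  · intro i j hij
    rw [J.dist_map, L.dist_map]
    exact hf2 i j hij
  · intro a a' haa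
    rw [J.dist_map, L.dist_map]
    exact hf3 a a' haa


/-- The bipartite graph associated to a neighborhood assignment. -/
def udgGraph {b m : ℕ} (ψ : Fin m → Finset (Fin b)) : SimpleGraph (Fin b ⊕ Fin m) where
  Adj x y := (∃ j a, x = Sum.inl j ∧ y = Sum.inr a ∧ j ∈ ψ a) ∨
             (∃ j a, y = Sum.inl j ∧ x = Sum.inr a ∧ j ∈ ψ a)
  symm := ⟨fun x y h => Or.symm h⟩
  loopless := ⟨by
    rintro x (⟨j, a, h1, h2, _⟩ | ⟨j, a, h1, h2, _⟩) <;> (subst h1; simp at h2)⟩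

lemma udgGraph_adj_inl_inr {b m : ℕ} (ψ : Fin m → Finset (Fin b)) (j : Fin b) (a : Fin m) :
    (udgGraph ψ).Adj (.inl j) (.inr a) ↔ j ∈ ψ a := by
  simp [udgGraph]

lemma udgGraph_adj_inr_inl {b m : ℕ} (ψ : Fin m → Finset (Fin b)) (j : Fin b) (a : Fin m) :
    (udgGraph ψ).Adj (.inr a) (.inl j) ↔ j ∈ ψ a := by
  simp [udgGraph]

lemma udgGraph_adj_inl_inl {b m : ℕ} (ψ : Fin m → Finset (Fin b)) (i j : Fin b) :
    ¬ (udgGraph ψ).Adj (.inl i) (.inl j) := by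
  simp [udgGraph]

lemma udgGraph_adj_inr_inr {b m : ℕ} (ψ : Fin m → Finset (Fin b)) (a a' : Fin m) :
    ¬ (udgGraph ψ).Adj (.inr a) (.inr a') := by
  simp [udgGraph]

lemma udg_main (n d b m : ℕ) (hd : 1 ≤ d) (hnm : n = b + m) :
    Nat.descFactorial (b.choose d) m ≤ Nat.card {G : SimpleGraph (Fin n) |
      ∃ f : Fin n → EuclideanSpace ℝ (Fin d), Function.Injective f ∧
        ∀ i j : Fin n, i ≠ j → (G.Adj i j ↔ dist (f i) (f j) = 1)} := by
  classical
  set ev : (Fin b ⊕ Fin m) ≃ Fin n := finSumFinEquiv.trans (finCongr hnm.symm) with hev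
  set Φ : (Fin m ↪ {S : Finset (Fin b) // S.card = d}) → SimpleGraph (Fin n) :=
    fun Ψ => (udgGraph (fun a => (Ψ a).1)).map ev.toEmbedding with hΦ
  have hadj : ∀ Ψ (x y : Fin b ⊕ Fin m),
      (Φ Ψ).Adj (ev x) (ev y) ↔ (udgGraph (fun a => (Ψ a).1)).Adj x y := by
    intro Ψ x y
    rw [hΦ]
    exact SimpleGraph.map_adj_apply
  have hΦinj : Function.Injective Φ := by
    intro Ψ Ψ' hΨΨ
    have key : ∀ a, (Ψ a).1 = (Ψ' a).1 := by
      intro a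
      ext j
      have h1 := hadj Ψ (.inl j) (.inr a)
      have h2 := hadj Ψ' (.inl j) (.inr a)
      rw [hΨΨ] at h1
      rw [udgGraph_adj_inl_inr] at h1 h2
      rw [← h1, h2]
    apply DFunLike.ext
    intro a
    exact Subtype.ext (key a)
  have hmem : ∀ Ψ, Φ Ψ ∈ {G : SimpleGraph (Fin n) |
      ∃ f : Fin n → EuclideanSpace ℝ (Fin d), Function.Injective f ∧
        ∀ i j : Fin n, i ≠ j → (G.Adj i j ↔ dist (f i) (f j) = 1)} := by
    intro Ψ
    obtain ⟨f, hfi, hf1, hf2, hf3⟩ := udg_geo d hd b m (fun a => (Ψ a).1)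
      (fun a => (Ψ a).2) (fun a a' h => Ψ.injective (Subtype.ext h))
    refine ⟨fun i => f (ev.symm i), hfi.comp ev.symm.injective, ?_⟩
    intro i j hij
    have hIJ : i = ev (ev.symm i) := (ev.apply_symm_apply i).symm
    have hJJ : j = ev (ev.symm j) := (ev.apply_symm_apply j).symm
    rw [hIJ, hJJ, hadj Ψ (ev.symm i) (ev.symm j)]
    simp only [Equiv.symm_apply_apply]
    have hxy : ev.symm i ≠ ev.symm j := fun h => hij (by rw [hIJ, hJJ, h])
    rcases hx : ev.symm i with x | x <;> rcases hy : ev.symm j with y | y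
    · rw [hx, hy] at hxy
      have : x ≠ y := fun h => hxy (by rw [h])
      exact iff_of_false (udgGraph_adj_inl_inl _ x y) (hf2 x y this)
    · rw [udgGraph_adj_inl_inr]
      exact (hf1 x y).symm
    · rw [udgGraph_adj_inr_inl]
      rw [dist_comm]
      exact (hf1 y x).symm
    · rw [hx, hy] at hxy
      have : x ≠ y := fun h => hxy (by rw [h])
      exact iff_of_false (udgGraph_adj_inr_inr _ x y) (hf3 x y this)
  -- counting
  have hcard1 : Fintype.card (Fin m ↪ {S : Finset (Fin b) // S.card = d})
      = Nat.descFactorial (b.choose d) m := by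
    rw [Fintype.card_embedding_eq, Fintype.card_finset_len, Fintype.card_fin, Fintype.card_fin]
  have hle : Nat.card (Fin m ↪ {S : Finset (Fin b) // S.card = d})
      ≤ Nat.card {G : SimpleGraph (Fin n) |
      ∃ f : Fin n → EuclideanSpace ℝ (Fin d), Function.Injective f ∧
        ∀ i j : Fin n, i ≠ j → (G.Adj i j ↔ dist (f i) (f j) = 1)} := by
    apply Nat.card_le_card_of_injective
      (fun Ψ => (⟨Φ Ψ, hmem Ψ⟩ : {G : SimpleGraph (Fin n) //
        G ∈ {G : SimpleGraph (Fin n) |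
        ∃ f : Fin n → EuclideanSpace ℝ (Fin d), Function.Injective f ∧
          ∀ i j : Fin n, i ≠ j → (G.Adj i j ↔ dist (f i) (f j) = 1)}}))
    intro Ψ Ψ' h
    exact hΦinj (congrArg Subtype.val h)
  rw [Nat.card_eq_fintype_card, hcard1] at hle
  exact hle


end UDG15

/-- with `b = ⌈n / log₂ n⌉`, if `b ≥ d` and `C(b,d)` is at least the size
`n - b` of `A`, then the number of labelled faithful unit distance graphs on `n` vertices
in `ℝ^d` is at least `|A|! · C(C(b,d), |A|)`. -/
theorem stmt_15 (n d b : ℕ) (hn : 1 ≤ n) (hd : 1 ≤ d)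
    (hb : b = ⌈(n : ℝ) / Real.logb 2 n⌉₊) (hbd : d ≤ b) (hA : n - b ≤ Nat.choose b d) :
    Nat.factorial (n - b) * Nat.choose (Nat.choose b d) (n - b) ≤
      Nat.card {G : SimpleGraph (Fin n) |
        ∃ f : Fin n → EuclideanSpace ℝ (Fin d), Function.Injective f ∧
          ∀ i j : Fin n, i ≠ j → (G.Adj i j ↔ dist (f i) (f j) = 1)} := by
  rcases le_or_gt b n with hbn | hbn
  · have h := udg_main n d b (n - b) hd (by omega)
    rwa [Nat.descFactorial_eq_factorial_mul_choose] at h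
  · have h0 : n - b = 0 := by omega
    rw [h0]
    have h := udg_main n d n 0 hd (by omega)
    rw [Nat.descFactorial_zero] at h
    simpa using h
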